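/- arXiv:2310.07208 — 6 statements merged into one kernel-verified Lean document; each statement's English description precedes it below -/
import Mathlib

section
/- Let k, ℓ, m be positive natural numbers and let weights w_1,…,w_N be nonnegative reals with Σ_i w_i ≤ k/ℓ, and let values a_1,…,a_N be nonnegative reals with Σ_i w_i·a_i ≥ m. If additionally each w_i ≤ 1, then the sum of the ⌊k/ℓ⌋ largest values among a_1,…,a_N (or all of them if N ≤ ⌊k/ℓ⌋) is at least (m/(k/ℓ))·⌊k/ℓ⌋. -/
theorem stmt6 (k ℓ m N : ℕ) (hk : 0 < k) (hl : 0 < ℓ) (hm : 0 < m)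
    (w a : Fin N → ℝ)
    (hw0 : ∀ i, 0 ≤ w i) (hw1 : ∀ i, w i ≤ 1)
    (ha0 : ∀ i, 0 ≤ a i)
    (hwsum : ∑ i, w i ≤ (k : ℝ) / (ℓ : ℝ))
    (hwa : (m : ℝ) ≤ ∑ i, w i * a i)
    (T : Finset (Fin N)) (hTcard : T.card = min (k / ℓ) N)
    (hTtop : ∀ i ∈ T, ∀ j, j ∉ T → a j ≤ a i) :
    ((m : ℝ) / ((k : ℝ) / (ℓ : ℝ))) * ((k / ℓ : ℕ) : ℝ) ≤ ∑ i ∈ T, a i := by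
  have hW : (0:ℝ) < (k : ℝ) / (ℓ : ℝ) := by positivity
  have htW : ((k / ℓ : ℕ) : ℝ) ≤ (k : ℝ) / (ℓ : ℝ) := Nat.cast_div_le
  have hm' : (0:ℝ) ≤ m := Nat.cast_nonneg m
  have hS0 : (0:ℝ) ≤ ∑ i ∈ T, a i := Finset.sum_nonneg fun i _ => ha0 i
  rcases le_or_gt N (k / ℓ) with hN | hN
  · have hTuniv : T = Finset.univ := by
      apply Finset.eq_univ_of_card
      rw [hTcard, min_eq_right hN, Fintype.card_fin]
    have h1 : (m:ℝ) ≤ ∑ i ∈ T, a i := by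
      rw [hTuniv]
      refine hwa.trans (Finset.sum_le_sum fun i _ => ?_)
      exact mul_le_of_le_one_left (ha0 i) (hw1 i)
    calc (m:ℝ) / ((k : ℝ) / (ℓ : ℝ)) * ((k / ℓ : ℕ) : ℝ)
        ≤ (m:ℝ) / ((k : ℝ) / (ℓ : ℝ)) * ((k : ℝ) / (ℓ : ℝ)) :=
          mul_le_mul_of_nonneg_left htW (by positivity)
      _ = (m:ℝ) := div_mul_cancel₀ _ hW.ne'
      _ ≤ _ := h1
  · have hTcard' : T.card = k / ℓ := by rw [hTcard, min_eq_left hN.le]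
    rcases Nat.eq_zero_or_pos (k / ℓ) with ht0 | ht
    · rw [ht0]
      simpa using hS0
    · have hTne : T.Nonempty := by
        rw [← Finset.card_pos, hTcard']; exact ht
      obtain ⟨i0, hi0T, hi0⟩ := T.exists_mem_eq_inf' hTne a
      set b : ℝ := T.inf' hTne a with hbdef
      have hbmem : ∀ i ∈ T, b ≤ a i := fun i hi => Finset.inf'_le a hi
      have hb0 : 0 ≤ b := hi0 ▸ ha0 i0
      have hout : ∀ j, j ∉ T → a j ≤ b := fun j hj => hi0 ▸ hTtop i0 hi0T j hj
      set t : ℝ := ((k / ℓ : ℕ) : ℝ) with htdef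
      set S : ℝ := ∑ i ∈ T, a i with hSdef
      have ht0' : (0:ℝ) ≤ t := Nat.cast_nonneg _
      have htb : t * b ≤ S := by
        have h := Finset.sum_le_sum (fun i hi => hbmem i hi)
        simpa [Finset.sum_const, hTcard', mul_comm] using h
      have hkey : (m:ℝ) ≤ S - b * t + b * ((k : ℝ) / (ℓ : ℝ)) := by
        have hsplit : ∑ i, w i * a i
            = ∑ i ∈ T, w i * a i + ∑ i ∈ Tᶜ, w i * a i :=
          (Finset.sum_add_sum_compl T _).symm
        have h1 : ∑ i ∈ T, w i * a i ≤ S - b * t + b * ∑ i ∈ T, w i := by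
          have hpt : ∀ i ∈ T, w i * a i ≤ a i - (1 - w i) * b := by
            intro i hi
            have h2 : (1 - w i) * b ≤ (1 - w i) * a i :=
              mul_le_mul_of_nonneg_left (hbmem i hi) (by linarith [hw1 i])
            nlinarith
          calc ∑ i ∈ T, w i * a i ≤ ∑ i ∈ T, (a i - (1 - w i) * b) :=
                Finset.sum_le_sum hpt
            _ = S - b * t + b * ∑ i ∈ T, w i := by
                simp only [sub_mul, one_mul, Finset.sum_sub_distrib,
                  Finset.sum_const, hTcard', nsmul_eq_mul, ← hSdef]
                rw [← Finset.sum_mul, htdef]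
                ring
        have h2 : ∑ i ∈ Tᶜ, w i * a i ≤ b * ∑ i ∈ Tᶜ, w i := by
          rw [Finset.mul_sum]
          refine Finset.sum_le_sum fun i hi => ?_
          rw [mul_comm b]
          exact mul_le_mul_of_nonneg_left (hout i (by simpa using hi)) (hw0 i)
        have hsum : ∑ i ∈ T, w i + ∑ i ∈ Tᶜ, w i ≤ (k : ℝ) / (ℓ : ℝ) := by
          rw [Finset.sum_add_sum_compl]; exact hwsum
        have hbw : b * (∑ i ∈ T, w i + ∑ i ∈ Tᶜ, w i) ≤ b * ((k : ℝ) / (ℓ : ℝ)) :=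
          mul_le_mul_of_nonneg_left hsum hb0
        calc (m:ℝ) ≤ ∑ i, w i * a i := hwa
          _ = ∑ i ∈ T, w i * a i + ∑ i ∈ Tᶜ, w i * a i := hsplit
          _ ≤ (S - b * t + b * ∑ i ∈ T, w i) + b * ∑ i ∈ Tᶜ, w i := add_le_add h1 h2
          _ = S - b * t + b * (∑ i ∈ T, w i + ∑ i ∈ Tᶜ, w i) := by ring
          _ ≤ S - b * t + b * ((k : ℝ) / (ℓ : ℝ)) := by linarith
      -- conclude: m * t ≤ S * W
      rw [div_mul_eq_mul_div, div_le_iff₀ hW]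
      nlinarith [htW, htb, hkey, hb0, ht0', hS0]
end

section
/- In the modified Hochbaum-Shmoys algorithm for Fault-tolerant k-Supplier, suppose R ⊆ C is processed in nonincreasing order of ℓ_v, each j ∈ R receives child(j) = {v remaining : d(v,j) ≤ 2r}, and S ⊆ F contains ℓ_j points of B(j,r) for each j ∈ R. Then for every client v ∈ C, d_{ℓ_v}(v,S) ≤ 3r. -/
/-- The `a`-th smallest distance from `x` to the points of the finite set `S`
(`a` is 1-indexed). -/
noncomputable def kthDist {X : Type*} [MetricSpace X] (x : X) (S : Finset X) (a : ℕ) : ℝ :=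
  ((S.val.map (dist x)).sort (· ≤ ·)).getD (a - 1) 0

lemma sorted_getD_le {l : List ℝ} (hs : l.Pairwise (· ≤ ·)) {a : ℕ} (D : ℝ)
    (ha : 1 ≤ a) (hcount : a ≤ l.countP (fun x => decide (x ≤ D))) :
    l.getD (a - 1) 0 ≤ D := by
  have hlen : a - 1 < l.length := by
    have h2 := (l.countP_le_length (p := fun x => decide (x ≤ D)))
    exact lt_of_lt_of_le (Nat.sub_lt ha one_pos) (le_trans hcount h2)
  rw [List.getD_eq_getElem l 0 hlen]
  by_contra hgt
  push_neg at hgt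
  have hdrop : l.drop (a - 1) = l[a-1] :: l.drop a := by
    rw [List.drop_eq_getElem_cons hlen]
    rw [show a - 1 + 1 = a from by omega]
  have hzero : (l.drop (a-1)).countP (fun x => decide (x ≤ D)) = 0 := by
    rw [List.countP_eq_zero]
    intro x hx
    simp only [decide_eq_true_eq]
    push_neg
    refine lt_of_lt_of_le hgt ?_
    have hsd : (l.drop (a-1)).Pairwise (· ≤ ·) := hs.drop
    rw [hdrop] at hsd hx
    rcases List.mem_cons.mp hx with h | h
    · exact le_of_eq h.symm
    · exact List.rel_of_pairwise_cons hsd h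
  have hsplit : l.countP (fun x => decide (x ≤ D)) =
      (l.take (a-1)).countP (fun x => decide (x ≤ D)) +
      (l.drop (a-1)).countP (fun x => decide (x ≤ D)) := by
    conv_lhs => rw [← List.take_append_drop (a-1) l]
    rw [List.countP_append]
  have h1 : (l.take (a-1)).countP (fun x => decide (x ≤ D)) ≤ a - 1 := by
    have := List.countP_le_length (l := l.take (a-1)) (p := fun x => decide (x ≤ D))
    have := List.length_take_le (a-1) l
    omega
  omega

lemma kthDist_le {X : Type*} [MetricSpace X] [DecidableEq X] (x : X) (S : Finset X)
    {a : ℕ} (D : ℝ) (ha : 1 ≤ a)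
    (h : a ≤ (S.filter (fun s => dist x s ≤ D)).card) :
    kthDist x S a ≤ D := by
  unfold kthDist
  apply sorted_getD_le (Multiset.pairwise_sort _ _) D ha
  have hms : ((S.val.map (dist x)).sort (· ≤ ·) : Multiset ℝ) = S.val.map (dist x) :=
    Multiset.sort_eq _ _
  rw [← Multiset.coe_countP, hms, Multiset.countP_map]
  calc a ≤ (S.filter (fun s => dist x s ≤ D)).card := h
    _ = Multiset.card (S.val.filter (fun s => dist x s ≤ D)) := rfl
    _ ≤ _ := by
        apply le_of_eq
        congr 1

theorem stmt11 {X : Type*} [MetricSpace X] [DecidableEq X] (r : ℝ)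
    (C F R S : Finset X) (ℓ : X → ℕ) (child : X → Finset X)
    (hRC : R ⊆ C) (hSF : S ⊆ F)
    (hpart : C = R.biUnion child)
    (hdisj : ∀ j ∈ R, ∀ j' ∈ R, j ≠ j' → Disjoint (child j) (child j'))
    (hchild : ∀ j ∈ R, ∀ v ∈ child j, dist v j ≤ 2 * r ∧ ℓ v ≤ ℓ j)
    (hopen : ∀ j ∈ R, ℓ j ≤ (S.filter (fun s => dist j s ≤ r)).card)
    (hl1 : ∀ v ∈ C, 1 ≤ ℓ v) :
    ∀ v ∈ C, kthDist v S (ℓ v) ≤ 3 * r := by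
  intro v hv
  obtain ⟨j, hj, hvj⟩ := Finset.mem_biUnion.mp (hpart ▸ hv)
  obtain ⟨hd, hℓ⟩ := hchild j hj v hvj
  apply kthDist_le v S (3 * r) (hl1 v hv)
  calc ℓ v ≤ ℓ j := hℓ
    _ ≤ (S.filter (fun s => dist j s ≤ r)).card := hopen j hj
    _ ≤ (S.filter (fun s => dist v s ≤ 3 * r)).card := by
        apply Finset.card_le_card
        intro s hs
        rw [Finset.mem_filter] at hs ⊢
        refine ⟨hs.1, ?_⟩
        calc dist v s ≤ dist v j + dist j s := dist_triangle v j s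
          _ ≤ 2 * r + r := add_le_add hd hs.2
          _ = 3 * r := by ring
end

section
/- In the gap instance of k identical gadgets (each with k facilities at distance 1 from k big clients of fault-tolerance k, and one small client of fault-tolerance 1 at distance 1 from all k facilities of the gadget, gadgets infinitely far apart), any integral solution S ⊆ F with |S| ≤ k serves at most k clients within any finite radius; in particular, a big client of some gadget is served only if all k facilities of that gadget are open, in which case no facility is open in any other gadget. -/
theorem stmt15 (k : ℕ) (hk : 2 ≤ k) (α : ℝ)
    (d : (Fin k ⊕ Fin k × Fin k) → (Fin k × Fin k) → ℝ)
    (hin_small : ∀ (g : Fin k) (f : Fin k × Fin k), f.1 = g → d (Sum.inl g) f ≤ α)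
    (hin_big : ∀ (g i : Fin k) (f : Fin k × Fin k), f.1 = g → d (Sum.inr (g, i)) f ≤ α)
    (hout_small : ∀ (g : Fin k) (f : Fin k × Fin k), f.1 ≠ g → α < d (Sum.inl g) f)
    (hout_big : ∀ (g i : Fin k) (f : Fin k × Fin k), f.1 ≠ g → α < d (Sum.inr (g, i)) f)
    (S : Finset (Fin k × Fin k)) (hS : S.card ≤ k)
    (ℓc : (Fin k ⊕ Fin k × Fin k) → ℕ)
    (hℓc : ℓc = Sum.elim (fun _ => 1) (fun _ => k))
    (served : Finset (Fin k ⊕ Fin k × Fin k))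
    (hserved : served =
      Finset.univ.filter (fun c => ℓc c ≤ (S.filter (fun f => d c f ≤ α)).card)) :
    served.card < 2 * k ∧
    ∀ g i : Fin k, Sum.inr (g, i) ∈ served →
      S = Finset.univ.filter (fun f : Fin k × Fin k => f.1 = g) := by
  subst hℓc hserved
  -- filter rewriting for small clients
  have hfs : ∀ g : Fin k, S.filter (fun f => d (Sum.inl g) f ≤ α)
      = S.filter (fun f => f.1 = g) := by
    intro g
    apply Finset.filter_congr
    intro f _
    constructor
    · intro h
      by_contra hne
      exact absurd h (not_le.2 (hout_small g f hne))
    · exact hin_small g f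
  have hfb : ∀ g i : Fin k, S.filter (fun f => d (Sum.inr (g, i)) f ≤ α)
      = S.filter (fun f => f.1 = g) := by
    intro g i
    apply Finset.filter_congr
    intro f _
    constructor
    · intro h
      by_contra hne
      exact absurd h (not_le.2 (hout_big g i f hne))
    · exact hin_big g i f
  -- the target set for a gadget g
  have hTcard : ∀ g : Fin k,
      (Finset.univ.filter (fun f : Fin k × Fin k => f.1 = g)).card = k := by
    intro g
    have : (Finset.univ.filter (fun f : Fin k × Fin k => f.1 = g))
        = Finset.univ.map ⟨fun i => (g, i), fun a b h => (Prod.mk.injEq _ _ _ _ ▸ h : g = g ∧ a = b).2⟩ := by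
      ext f
      simp only [Finset.mem_filter, Finset.mem_univ, true_and, Finset.mem_map,
        Function.Embedding.coeFn_mk]
      constructor
      · intro h
        exact ⟨f.2, by rw [← h]; rfl⟩
      · rintro ⟨i, rfl⟩; rfl
    rw [this, Finset.card_map, Finset.card_univ, Fintype.card_fin]
  -- second conjunct
  have key : ∀ g i : Fin k,
      Sum.inr (g, i) ∈ Finset.univ.filter
        (fun c => Sum.elim (fun _ => 1) (fun _ => k) c ≤ (S.filter (fun f => d c f ≤ α)).card) →
      S = Finset.univ.filter (fun f : Fin k × Fin k => f.1 = g) := by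
    intro g i hmem
    simp only [Finset.mem_filter, Finset.mem_univ, true_and, Sum.elim_inr] at hmem
    rw [hfb g i] at hmem
    have hsub : S.filter (fun f => f.1 = g) = S := by
      apply Finset.eq_of_subset_of_card_le (Finset.filter_subset _ _)
      exact hS.trans hmem
    have hSsub : S ⊆ Finset.univ.filter (fun f : Fin k × Fin k => f.1 = g) := by
      intro f hf
      rw [← hsub] at hf
      simp only [Finset.mem_filter] at hf ⊢
      exact ⟨Finset.mem_univ _, hf.2⟩
    refine Finset.eq_of_subset_of_card_le hSsub ?_
    rw [hTcard g]
    rw [hsub] at hmem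
    exact hmem
  refine ⟨?_, key⟩
  by_cases hbig : ∃ g i : Fin k, Sum.inr (g, i) ∈ Finset.univ.filter
      (fun c => Sum.elim (fun _ => 1) (fun _ => k) c ≤ (S.filter (fun f => d c f ≤ α)).card)
  · obtain ⟨g, i, hgi⟩ := hbig
    have hSg := key g i hgi
    -- all served clients belong to gadget g
    have hsub : Finset.univ.filter
        (fun c => Sum.elim (fun _ => 1) (fun _ => k) c ≤ (S.filter (fun f => d c f ≤ α)).card)
        ⊆ insert (Sum.inl g)
            (Finset.univ.map ⟨fun j : Fin k => Sum.inr (g, j), fun a b h => by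
              simpa [Prod.ext_iff] using h⟩) := by
      intro c hc
      simp only [Finset.mem_filter, Finset.mem_univ, true_and] at hc
      have hgad : ∀ g' : Fin k, g' ≠ g → (S.filter (fun f => f.1 = g')).card = 0 := by
        intro g' hne
        rw [Finset.card_eq_zero, Finset.filter_eq_empty_iff]
        intro f hf
        rw [hSg] at hf
        simp only [Finset.mem_filter] at hf
        rw [hf.2]
        exact fun h => hne h.symm
      simp only [Finset.mem_insert, Finset.mem_map, Finset.mem_univ,
        Function.Embedding.coeFn_mk]
      match c with
      | Sum.inl g' =>
        left
        simp only [Sum.elim_inl] at hc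
        rw [hfs g'] at hc
        by_contra hne
        have : g' ≠ g := fun h => hne (by rw [h])
        rw [hgad g' this] at hc
        omega
      | Sum.inr (g', j) =>
        right
        simp only [Sum.elim_inr] at hc
        rw [hfb g' j] at hc
        have hg' : g' = g := by
          by_contra hne
          rw [hgad g' hne] at hc
          omega
        exact ⟨j, trivial, by rw [hg']; rfl⟩
    calc (Finset.univ.filter _).card
        ≤ _ := Finset.card_le_card hsub
      _ ≤ 1 + k := by
          refine (Finset.card_insert_le _ _).trans ?_
          rw [Finset.card_map, Finset.card_univ, Fintype.card_fin]
          omega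
      _ < 2 * k := by omega
  · push_neg at hbig
    have hsub : Finset.univ.filter
        (fun c => Sum.elim (fun _ => 1) (fun _ => k) c ≤ (S.filter (fun f => d c f ≤ α)).card)
        ⊆ Finset.univ.map ⟨Sum.inl, Sum.inl_injective⟩ := by
      intro c hc
      simp only [Finset.mem_map, Finset.mem_univ, Function.Embedding.coeFn_mk]
      match c with
      | Sum.inl g' => exact ⟨g', trivial, rfl⟩
      | Sum.inr (g', j) => exact absurd hc (hbig g' j)
    calc (Finset.univ.filter _).card
        ≤ _ := Finset.card_le_card hsub
      _ = k := by rw [Finset.card_map, Finset.card_univ, Fintype.card_fin]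
      _ < 2 * k := by omega
end

section
/- Let R be a finite set of points in a metric space processed in some order, and build a directed forest by: when processing j, add edges from j to all current roots j' with d(j,j') ≤ 2^{h(j')}·r, then set h(j) := 1 + max of h over j's new children (0 if none), and make j a root. Suppose additionally that whenever (j,j') is an edge, ℓ_j > ℓ_{j'} for labels ℓ taking at most t distinct values. Then every tree in the resulting forest has root height at most t, and every vertex w in a tree with root ρ satisfies d(ρ,w) ≤ (2^{h(ρ)} − 2^{h(w)})·r ≤ (2^t − 1)·r. -/
theorem stmt16 {X : Type*} [MetricSpace X] {V : Type*} [Fintype V] [DecidableEq V]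
    (r : ℝ) (hr : 0 ≤ r) (t : ℕ)
    (parent : V → V) (pos : V → X) (h : V → ℕ) (ℓ : V → ℕ)
    (hlab : (Finset.univ.image ℓ).card ≤ t)
    (hreach : ∀ v : V, ∃ n : ℕ, parent (parent^[n] v) = parent^[n] v)
    (hdec : ∀ w : V, parent w ≠ w → h w < h (parent w))
    (hlen : ∀ w : V, parent w ≠ w → dist (pos (parent w)) (pos w) ≤ (2 : ℝ) ^ (h w) * r)
    (hℓ : ∀ w : V, parent w ≠ w → ℓ w < ℓ (parent w))
    (hheight : ∀ v : V, (∃ w, w ≠ v ∧ parent w = v) →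
      ∃ w, w ≠ v ∧ parent w = v ∧ h v = h w + 1)
    (hleaf : ∀ v : V, (¬∃ w, w ≠ v ∧ parent w = v) → h v = 0) :
    ∀ ρ w : V, parent ρ = ρ → (∃ n : ℕ, parent^[n] w = ρ) →
      h ρ ≤ t ∧
      dist (pos ρ) (pos w) ≤ ((2 : ℝ) ^ (h ρ) - (2 : ℝ) ^ (h w)) * r ∧
      ((2 : ℝ) ^ (h ρ) - (2 : ℝ) ^ (h w)) * r ≤ ((2 : ℝ) ^ t - 1) * r := by
  -- key chain lemma: a vertex of height n yields n+1 distinct labels below it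
  have key : ∀ n (v : V), h v = n →
      ∃ s : Finset ℕ, s ⊆ Finset.univ.image ℓ ∧ s.card = n + 1 ∧ ∀ x ∈ s, x ≤ ℓ v := by
    intro n
    induction n with
    | zero =>
      intro v _
      exact ⟨{ℓ v}, by simp, by simp, by simp⟩
    | succ n ih =>
      intro v hv
      by_cases hc : ∃ w, w ≠ v ∧ parent w = v
      · obtain ⟨w, hwv, hpw, hhv⟩ := hheight v hc
        have hw : h w = n := by omega
        obtain ⟨s, hs1, hs2, hs3⟩ := ih w hw
        have hpw' : parent w ≠ w := by rw [hpw]; exact fun e => hwv e.symm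
        have hlt : ℓ w < ℓ v := by
          have := hℓ w hpw'
          rwa [hpw] at this
        refine ⟨insert (ℓ v) s, ?_, ?_, ?_⟩
        · intro x hx
          rcases Finset.mem_insert.mp hx with hx | hx
          · subst hx; exact Finset.mem_image.mpr ⟨v, Finset.mem_univ v, rfl⟩
          · exact hs1 hx
        · rw [Finset.card_insert_of_notMem, hs2]
          intro hmem
          have := hs3 _ hmem
          omega
        · intro x hx
          rcases Finset.mem_insert.mp hx with hx | hx
          · subst hx; exact le_refl _
          · exact le_of_lt (lt_of_le_of_lt (hs3 x hx) hlt)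
      · have := hleaf v hc; omega
  intro ρ w hρ hreachw
  have hρt : h ρ ≤ t := by
    obtain ⟨s, hs1, hs2, _⟩ := key (h ρ) ρ rfl
    have := Finset.card_le_card hs1
    omega
  -- distance bound by induction on the number of steps to the root
  have dist2 : ∀ n (w : V), parent^[n] w = ρ →
      dist (pos ρ) (pos w) ≤ ((2 : ℝ) ^ (h ρ) - (2 : ℝ) ^ (h w)) * r := by
    intro n
    induction n with
    | zero =>
      intro w hw
      simp only [Function.iterate_zero, id_eq] at hw
      subst hw; simp
    | succ n ih =>
      intro w hw
      by_cases hpw : parent w = w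
      · have hfix : parent^[n + 1] w = w := Function.iterate_fixed hpw (n + 1)
        rw [hfix] at hw
        subst hw; simp
      · have step : parent^[n] (parent w) = ρ := by
          rw [← Function.iterate_succ_apply]; exact hw
        have IH := ih (parent w) step
        have htri := dist_triangle (pos ρ) (pos (parent w)) (pos w)
        have hle := hlen w hpw
        have hhw : h w + 1 ≤ h (parent w) := hdec w hpw
        have hpow : (2 : ℝ) ^ (h w + 1) ≤ (2 : ℝ) ^ (h (parent w)) :=
          pow_le_pow_right₀ one_le_two hhw
        have hpow' : (2 : ℝ) ^ (h w) * 2 ≤ (2 : ℝ) ^ (h (parent w)) := by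
          rw [← pow_succ]; exact hpow
        nlinarith [hr]
  obtain ⟨n, hn⟩ := hreachw
  refine ⟨hρt, dist2 n w hn, ?_⟩
  have h2 : (2 : ℝ) ^ (h ρ) ≤ (2 : ℝ) ^ t := pow_le_pow_right₀ one_le_two hρt
  have h3 : (1 : ℝ) ≤ (2 : ℝ) ^ (h w) := one_le_pow₀ one_le_two
  apply mul_le_mul_of_nonneg_right _ hr
  linarith
end

section
/- Let (cov, x) be a feasible solution to the UFkSO LP: Σ_v cov_v ≥ m, Σ_i x_i ≤ k, Σ_{i ∈ F ∩ B(v,r)} x_i ≥ ℓ·cov_v for all v, cov_v = 0 whenever d_ℓ(v,F) > r, and 0 ≤ cov_v, x_i ≤ 1. If R ⊆ C is any r-well-separated set, then Σ_{j∈R} cov_j ≤ k/ℓ. -/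
open Classical in
theorem stmt17 {X : Type*} [MetricSpace X] (r : ℝ) (k m ℓ : ℕ) (hl : 1 ≤ ℓ)
    (C F : Finset X) (cov : X → ℝ) (x : X → ℝ)
    (hm : (m : ℝ) ≤ ∑ v ∈ C, cov v)
    (hk : ∑ i ∈ F, x i ≤ (k : ℝ))
    (hball : ∀ v ∈ C, (ℓ : ℝ) * cov v ≤ ∑ i ∈ F.filter (fun i => dist v i ≤ r), x i)
    (hfar : ∀ v ∈ C, (F.filter (fun i => dist v i ≤ r)).card < ℓ → cov v = 0)
    (hcovb : ∀ v ∈ C, 0 ≤ cov v ∧ cov v ≤ 1)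
    (hxb : ∀ i ∈ F, 0 ≤ x i ∧ x i ≤ 1)
    (R : Finset X) (hRC : R ⊆ C)
    (hsep : ∀ a ∈ R, ∀ b ∈ R, a ≠ b → 2 * r < dist a b) :
    ∑ j ∈ R, cov j ≤ (k : ℝ) / (ℓ : ℝ) := by
  have hl0 : (0 : ℝ) < (ℓ : ℝ) := by exact_mod_cast hl
  rw [le_div_iff₀ hl0, mul_comm]
  calc (ℓ : ℝ) * ∑ j ∈ R, cov j
      = ∑ j ∈ R, (ℓ : ℝ) * cov j := Finset.mul_sum _ _ _
    _ ≤ ∑ j ∈ R, ∑ i ∈ F.filter (fun i => dist j i ≤ r), x i :=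
        Finset.sum_le_sum fun j hj => hball j (hRC hj)
    _ = ∑ i ∈ R.biUnion (fun j => F.filter (fun i => dist j i ≤ r)), x i := by
        refine (Finset.sum_biUnion ?_).symm
        intro a ha b hb hab
        refine Finset.disjoint_left.2 fun i hia hib => ?_
        simp only [Finset.mem_filter] at hia hib
        have := hsep a ha b hb hab
        have : dist a b ≤ 2 * r := by
          calc dist a b ≤ dist a i + dist i b := dist_triangle a i b
            _ ≤ r + r := add_le_add hia.2 (by rw [dist_comm]; exact hib.2)
            _ = 2 * r := by ring
        linarith [hsep a ha b hb hab]
    _ ≤ ∑ i ∈ F, x i := by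
        refine Finset.sum_le_sum_of_subset_of_nonneg ?_ fun i hi _ => (hxb i hi).1
        intro i hi
        obtain ⟨j, _, hj⟩ := Finset.mem_biUnion.1 hi
        exact (Finset.mem_filter.1 hj).1
    _ ≤ (k : ℝ) := hk
end

section
/- Let 𝒫 be a (ρ,cov)-good partition with representatives R and children child(·), and let λ_v := |child(v)| for v ∈ R and λ_v := 0 otherwise. Suppose there exists S₀ ⊆ F with |S₀| ≤ k such that Σ_{v : |S₀ ∩ B(v,r)| ≥ ℓ_v} λ_v ≥ m. Then setting, for each part P, j'_P := the j ∈ R∩P with |S₀ ∩ B(j,r)| ≥ ℓ_j maximizing ℓ_j, and k'_P := ℓ_{j'_P} (and k'_P := 0 if no such j exists), the family (k'_P) satisfies k'_P ≤ ℓ_P := max_{v∈P} ℓ_v, Σ_P k'_P ≤ k, and Σ_P Σ_{j∈R∩P: ℓ_j ≤ k'_P} |child(j)| ≥ m. -/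
theorem stmt19 {X : Type*} [MetricSpace X] [DecidableEq X] (r : ℝ) (k m : ℕ)
    (C F : Finset X) (Part : Finset (Finset X)) (R : Finset X)
    (child : X → Finset X) (ℓ : X → ℕ)
    (S₀ : Finset X) (hS₀F : S₀ ⊆ F) (hS₀k : S₀.card ≤ k)
    (hRC : R ⊆ C)
    (hpart : C = Part.biUnion id)
    (hPartdisj : ∀ P ∈ Part, ∀ Q ∈ Part, P ≠ Q → Disjoint P Q)
    (hccover : C = R.biUnion child)
    (hcdisj : ∀ j ∈ R, ∀ j' ∈ R, j ≠ j' → Disjoint (child j) (child j'))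
    (hrefine : ∀ P ∈ Part, ∀ j ∈ R ∩ P, child j ⊆ P)
    (hchildl : ∀ j ∈ R, ∀ v ∈ child j, ℓ v ≤ ℓ j)
    (hsep : ∀ P ∈ Part, ∀ Q ∈ Part, P ≠ Q → ∀ j ∈ R ∩ P, ∀ j' ∈ R ∩ Q, 2 * r < dist j j')
    (lam : X → ℕ) (hlam : ∀ v : X, lam v = if v ∈ R then (child v).card else 0)
    (hm : m ≤ ∑ v ∈ C.filter
      (fun v => ℓ v ≤ (S₀.filter (fun s => dist v s ≤ r)).card), lam v)
    (j' : Finset X → X) (k' : Finset X → ℕ)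
    (hj' : ∀ P ∈ Part,
      (∃ j ∈ R ∩ P, ℓ j ≤ (S₀.filter (fun s => dist j s ≤ r)).card) →
        j' P ∈ R ∩ P ∧
        ℓ (j' P) ≤ (S₀.filter (fun s => dist (j' P) s ≤ r)).card ∧
        (∀ j ∈ R ∩ P, ℓ j ≤ (S₀.filter (fun s => dist j s ≤ r)).card → ℓ j ≤ ℓ (j' P)) ∧
        k' P = ℓ (j' P))
    (hk'0 : ∀ P ∈ Part,
      (¬∃ j ∈ R ∩ P, ℓ j ≤ (S₀.filter (fun s => dist j s ≤ r)).card) → k' P = 0) :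
    (∀ P ∈ Part, k' P ≤ P.sup ℓ) ∧
    (∑ P ∈ Part, k' P ≤ k) ∧
    (m ≤ ∑ P ∈ Part, ∑ j ∈ (R ∩ P).filter (fun j => ℓ j ≤ k' P), (child j).card) := by
  classical
  set cnt : X → ℕ := fun v => (S₀.filter (fun s => dist v s ≤ r)).card with hcnt
  refine ⟨?_, ?_, ?_⟩
  · intro P hP
    by_cases hex : ∃ j ∈ R ∩ P, ℓ j ≤ cnt j
    · obtain ⟨h1, h2, h3, h4⟩ := hj' P hP hex
      rw [h4]
      exact Finset.le_sup (Finset.mem_of_mem_inter_right h1)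
    · simp [hk'0 P hP hex]
  · -- sum k' ≤ k
    set T : Finset X → Finset X := fun P =>
      if ∃ j ∈ R ∩ P, ℓ j ≤ cnt j then S₀.filter (fun s => dist (j' P) s ≤ r) else ∅
      with hT
    have hle : ∀ P ∈ Part, k' P ≤ (T P).card := by
      intro P hP
      by_cases hex : ∃ j ∈ R ∩ P, ℓ j ≤ cnt j
      · obtain ⟨h1, h2, h3, h4⟩ := hj' P hP hex
        simp only [hT]
        rw [if_pos hex, h4]; exact h2
      · rw [hk'0 P hP hex]; exact Nat.zero_le _
    have hdisj : ∀ P ∈ Part, ∀ Q ∈ Part, P ≠ Q → Disjoint (T P) (T Q) := by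
      intro P hP Q hQ hPQ
      simp only [hT]
      by_cases hexP : ∃ j ∈ R ∩ P, ℓ j ≤ cnt j
      · by_cases hexQ : ∃ j ∈ R ∩ Q, ℓ j ≤ cnt j
        · rw [if_pos hexP, if_pos hexQ]
          obtain ⟨hP1, _, _, _⟩ := hj' P hP hexP
          obtain ⟨hQ1, _, _, _⟩ := hj' Q hQ hexQ
          have hd := hsep P hP Q hQ hPQ (j' P) hP1 (j' Q) hQ1
          rw [Finset.disjoint_left]
          intro s hsP hsQ
          have h1 := (Finset.mem_filter.mp hsP).2
          have h2 := (Finset.mem_filter.mp hsQ).2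
          have : dist (j' P) (j' Q) ≤ 2 * r := by
            calc dist (j' P) (j' Q) ≤ dist (j' P) s + dist s (j' Q) := dist_triangle _ _ _
              _ ≤ r + r := by rw [dist_comm s (j' Q)]; exact add_le_add h1 h2
              _ = 2 * r := by ring
          linarith
        · rw [if_neg hexQ]; exact Finset.disjoint_empty_right _
      · rw [if_neg hexP]; exact Finset.disjoint_empty_left _
    calc ∑ P ∈ Part, k' P ≤ ∑ P ∈ Part, (T P).card := Finset.sum_le_sum hle
      _ = (Part.biUnion T).card := (Finset.card_biUnion hdisj).symm
      _ ≤ S₀.card := by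
          apply Finset.card_le_card
          intro x hx
          obtain ⟨P, hP, hxP⟩ := Finset.mem_biUnion.mp hx
          simp only [hT] at hxP
          by_cases hexP : ∃ j ∈ R ∩ P, ℓ j ≤ cnt j
          · rw [if_pos hexP] at hxP
            exact (Finset.mem_filter.mp hxP).1
          · rw [if_neg hexP] at hxP
            exact absurd hxP (Finset.notMem_empty x)
      _ ≤ k := hS₀k
  · -- main sum
    set S : Finset X := R.filter (fun j => ℓ j ≤ cnt j) with hS
    have step1 : ∑ v ∈ C.filter (fun v => ℓ v ≤ cnt v), lam v
        = ∑ j ∈ S, (child j).card := by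
      rw [hS]
      have : ∀ v ∈ C.filter (fun v => ℓ v ≤ cnt v), lam v =
          if v ∈ R then (child v).card else 0 := fun v _ => hlam v
      rw [Finset.sum_congr rfl this, Finset.sum_ite_mem]
      congr 1
      ext j
      simp only [Finset.mem_inter, Finset.mem_filter]
      constructor
      · rintro ⟨⟨_, h2⟩, h3⟩; exact ⟨h3, h2⟩
      · rintro ⟨h1, h2⟩; exact ⟨⟨hRC h1, h2⟩, h1⟩
    have hScov : S = Part.biUnion (fun P => S ∩ P) := by
      ext j
      simp only [Finset.mem_biUnion, Finset.mem_inter]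
      constructor
      · intro hj
        have hjC : j ∈ C := hRC (Finset.mem_filter.mp hj).1
        rw [hpart] at hjC
        obtain ⟨P, hP, hjP⟩ := Finset.mem_biUnion.mp hjC
        exact ⟨P, hP, hj, hjP⟩
      · rintro ⟨P, _, hj, _⟩; exact hj
    have step2 : ∑ j ∈ S, (child j).card
        = ∑ P ∈ Part, ∑ j ∈ S ∩ P, (child j).card := by
      have hdisj' : ∀ P ∈ (Part : Finset (Finset X)), ∀ Q ∈ Part, P ≠ Q →
          Disjoint (S ∩ P) (S ∩ Q) := by
        intro P hP Q hQ hPQ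
        exact Finset.disjoint_of_subset_left Finset.inter_subset_right
          (Finset.disjoint_of_subset_right Finset.inter_subset_right
            (hPartdisj P hP Q hQ hPQ))
      have h := Finset.sum_biUnion (s := Part) (t := fun P => S ∩ P)
        (f := fun j => (child j).card) hdisj'
      rw [← hScov] at h
      exact h
    have step3 : ∀ P ∈ Part, ∑ j ∈ S ∩ P, (child j).card
        ≤ ∑ j ∈ (R ∩ P).filter (fun j => ℓ j ≤ k' P), (child j).card := by
      intro P hP
      apply Finset.sum_le_sum_of_subset
      intro j hj
      obtain ⟨hjS, hjP⟩ := Finset.mem_inter.mp hj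
      obtain ⟨hjR, hjcnt⟩ := Finset.mem_filter.mp hjS
      have hex : ∃ j ∈ R ∩ P, ℓ j ≤ cnt j :=
        ⟨j, Finset.mem_inter.mpr ⟨hjR, hjP⟩, hjcnt⟩
      obtain ⟨h1, h2, h3, h4⟩ := hj' P hP hex
      have := h3 j (Finset.mem_inter.mpr ⟨hjR, hjP⟩) hjcnt
      rw [Finset.mem_filter]
      exact ⟨Finset.mem_inter.mpr ⟨hjR, hjP⟩, by omega⟩
    calc m ≤ ∑ v ∈ C.filter (fun v => ℓ v ≤ cnt v), lam v := hm
      _ = ∑ j ∈ S, (child j).card := step1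
      _ = ∑ P ∈ Part, ∑ j ∈ S ∩ P, (child j).card := step2
      _ ≤ ∑ P ∈ Part, ∑ j ∈ (R ∩ P).filter (fun j => ℓ j ≤ k' P), (child j).card :=
          Finset.sum_le_sum step3
end
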